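/- Let λ be a partition with ℓ(λ) < n and gcd(n, |λ|) = 1. Then the statistic T ↦ Σ_{i=1}^n (i−1)·c_i(T) is equidistributed modulo n on SSYT_n(λ): for every residue r ∈ {0, 1, …, n−1}, one has n · #{T ∈ SSYT_n(λ) : Σ_{i=1}^n (i−1)c_i(T) ≡ r (mod n)} = #SSYT_n(λ). -/

import Mathlib

open Finset

/-- Semistandard Young tableaux of shape `μ` with entries in `{0, …, n-1}`
(the 0-indexed version of entries in `{1, …, n}`). -/
def SSYTn (μ : YoungDiagram) (n : ℕ) : Type :=
  {T : SemistandardYoungTableau μ // ∀ i j : ℕ, (i, j) ∈ μ → T i j < n}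

noncomputable instance (μ : YoungDiagram) (n : ℕ) : Fintype (SSYTn μ n) := by
  apply Fintype.ofInjective
    (fun (T : SSYTn μ n) (c : μ.cells) =>
      (⟨T.1 c.1.1 c.1.2,
        Nat.lt_succ_of_lt (T.2 c.1.1 c.1.2 c.2)⟩ :
        Fin (n + 1)))
  intro T T' h
  apply Subtype.ext
  apply SemistandardYoungTableau.ext
  intro i j
  by_cases hij : (i, j) ∈ μ
  · have := congrFun h ⟨(i, j), (YoungDiagram.mem_cells _).mpr hij⟩
    simpa using congrArg Fin.val this
  · rw [T.1.zeros hij, T'.1.zeros hij]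

/-- The content of a tableau: `ssytContent μ n T k` is the number of entries of `T`
equal to `k` (0-indexed). -/
def ssytContent (μ : YoungDiagram) (n : ℕ) (T : SSYTn μ n) : Fin n → ℕ :=
  fun k => (μ.cells.filter (fun c => T.1 c.1 c.2 = (k : ℕ))).card

/-- The cyclic shift `c(x_1,…,x_n) = (x_n, x_1, …, x_{n-1})` (0-indexed). -/
def cycShift {n : ℕ} {α : Type*} (x : Fin n → α) : Fin n → α :=
  fun i => if _h : (i : ℕ) = 0 then x ⟨n - 1, by have := i.isLt; omega⟩
           else x ⟨(i : ℕ) - 1, by have := i.isLt; omega⟩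

namespace BK

variable {μ : YoungDiagram}

/-- Entry `a` at a μ-cell that does not have `a+1` directly below. -/
def freeA (T : SemistandardYoungTableau μ) (a i j : ℕ) : Prop :=
  (i, j) ∈ μ ∧ T i j = a ∧ T (i + 1) j ≠ a + 1

/-- Entry `a+1` at a μ-cell that does not have `a` directly above. -/
def freeB (T : SemistandardYoungTableau μ) (a i j : ℕ) : Prop :=
  (i, j) ∈ μ ∧ T i j = a + 1 ∧ T (i - 1) j ≠ a

def free (T : SemistandardYoungTableau μ) (a i j : ℕ) : Prop :=
  freeA T a i j ∨ freeB T a i j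

noncomputable instance (T : SemistandardYoungTableau μ) (a i j : ℕ) :
    Decidable (freeA T a i j) := Classical.dec _

noncomputable instance (T : SemistandardYoungTableau μ) (a i j : ℕ) :
    Decidable (freeB T a i j) := Classical.dec _

noncomputable instance (T : SemistandardYoungTableau μ) (a i j : ℕ) :
    Decidable (free T a i j) := Classical.dec _

noncomputable def X (T : SemistandardYoungTableau μ) (a i : ℕ) : ℕ :=
  ((range (μ.rowLen i)).filter (fun j => freeA T a i j)).card

noncomputable def Y (T : SemistandardYoungTableau μ) (a i : ℕ) : ℕ :=
  ((range (μ.rowLen i)).filter (fun j => freeB T a i j)).card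

noncomputable def rank (T : SemistandardYoungTableau μ) (a i j : ℕ) : ℕ :=
  ((range (j + 1)).filter (fun j' => free T a i j')).card

noncomputable def bkE (T : SemistandardYoungTableau μ) (a i j : ℕ) : ℕ :=
  if free T a i j then (if rank T a i j ≤ Y T a i then a else a + 1) else T i j

variable {T : SemistandardYoungTableau μ} {a i j : ℕ}

lemma free.mem (h : free T a i j) : (i, j) ∈ μ := h.elim And.left And.left

lemma free.entry (h : free T a i j) : T i j = a ∨ T i j = a + 1 :=
  h.elim (fun h => Or.inl h.2.1) (fun h => Or.inr h.2.1)

lemma freeA.not_freeB (h : freeA T a i j) : ¬ freeB T a i j := fun h' => by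
  have := h.2.1; have := h'.2.1; omega

lemma not_free_of_entry (h1 : T i j ≠ a) (h2 : T i j ≠ a + 1) : ¬ free T a i j := by
  rintro (h | h)
  · exact h1 h.2.1
  · exact h2 h.2.1

/-- The cell below a free cell is unchanged and `≥ a+2` (if present). -/
lemma below_free (h : free T a i j) :
    T (i + 1) j ≠ a + 1 ∧ ((i + 1, j) ∈ μ → a + 2 ≤ T (i + 1) j) ∧ ¬ free T a (i + 1) j := by
  have hb : T (i + 1) j ≠ a + 1 := by
    rcases h with h | h
    · exact h.2.2
    · intro hc
      by_cases hm : (i + 1, j) ∈ μ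
      · have h2 := T.col_strict (by omega : i < i + 1) hm
        have := h.2.1
        omega
      · rw [T.zeros hm] at hc; omega
  have hb2 : (i + 1, j) ∈ μ → a + 2 ≤ T (i + 1) j := by
    intro hm
    have h2 := T.col_strict (by omega : i < i + 1) hm
    rcases h.entry with he | he <;> omega
  refine ⟨hb, hb2, ?_⟩
  intro hf
  have hm := hf.mem
  have := hb2 hm
  rcases hf.entry with he | he <;> omega

/-- The cell above a free cell is unchanged and `< a` (if `i > 0`). -/
lemma above_free (h : free T a i j) (hi : i ≠ 0) :
    T (i - 1) j < a ∧ ¬ free T a (i - 1) j := by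
  have hm : (i - 1, j) ∈ μ := μ.up_left_mem (by omega) le_rfl h.mem
  have hcs : T (i - 1) j < T i j := T.col_strict (by omega) h.mem
  have hlt : T (i - 1) j < a := by
    rcases h with h | h
    · have := h.2.1; omega
    · have := h.2.1; have := h.2.2; omega
  exact ⟨hlt, not_free_of_entry (by omega) (by omega)⟩

/-- Key counting lemma: in a finite set `F` of naturals, exactly `m` elements `j`
satisfy: the number of elements of `F` that are `≤ j` is at most `m`. -/
lemma count_rank_le (F : Finset ℕ) (m : ℕ) (hm : m ≤ F.card) :
    (F.filter (fun j => (F.filter (· ≤ j)).card ≤ m)).card = m := by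
  set r : ℕ → ℕ := fun j => (F.filter (· ≤ j)).card with hr
  have hmono : ∀ j ∈ F, ∀ j' ∈ F, j < j' → r j < r j' := by
    intro j hj j' hj' hlt
    apply Finset.card_lt_card
    constructor
    · intro x hx
      obtain ⟨hxF, hxle⟩ := Finset.mem_filter.mp hx
      exact Finset.mem_filter.mpr ⟨hxF, by omega⟩
    · intro hsub
      have : j' ∈ F.filter (· ≤ j') := Finset.mem_filter.mpr ⟨hj', le_rfl⟩
      have := hsub this
      have := (Finset.mem_filter.mp this).2
      omega
  have hone : ∀ j ∈ F, 1 ≤ r j := by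
    intro j hj
    have : j ∈ F.filter (· ≤ j) := Finset.mem_filter.mpr ⟨hj, le_rfl⟩
    exact Finset.card_pos.mpr ⟨j, this⟩
  set S := F.filter (fun j => r j ≤ m) with hS
  have hle : S.card ≤ m := by
    have hinj : Set.InjOn r S := by
      intro x hx y hy hxy
      simp only [hS, Finset.coe_filter, Set.mem_setOf_eq] at hx hy
      rcases lt_trichotomy x y with h | h | h
      · exact absurd hxy (by have := hmono x hx.1 y hy.1 h; omega)
      · exact h
      · exact absurd hxy (by have := hmono y hy.1 x hx.1 h; omega)
    have himg : S.image r ⊆ Finset.Icc 1 m := by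
      intro k hk
      obtain ⟨j, hj, rfl⟩ := Finset.mem_image.mp hk
      have hj' := Finset.mem_filter.mp hj
      exact Finset.mem_Icc.mpr ⟨hone j hj'.1, hj'.2⟩
    calc S.card = (S.image r).card := (Finset.card_image_of_injOn hinj).symm
      _ ≤ (Finset.Icc 1 m).card := Finset.card_le_card himg
      _ = m := by simp
  rcases Nat.lt_or_ge S.card m with hlt | hge
  · exfalso
    have hne : (F \ S).Nonempty := by
      rw [Finset.sdiff_nonempty]
      intro hsub
      have := Finset.card_le_card hsub
      omega
    set j0 := (F \ S).min' hne with hj0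
    have hj0m : j0 ∈ F \ S := Finset.min'_mem _ hne
    have hj0F : j0 ∈ F := (Finset.mem_sdiff.mp hj0m).1
    have hj0S : j0 ∉ S := (Finset.mem_sdiff.mp hj0m).2
    have hsub : F.filter (· ≤ j0) ⊆ insert j0 S := by
      intro j' hj'
      obtain ⟨hj'F, hj'le⟩ := Finset.mem_filter.mp hj'
      rcases eq_or_lt_of_le hj'le with h | h
      · exact Finset.mem_insert.mpr (Or.inl h)
      · refine Finset.mem_insert.mpr (Or.inr ?_)
        by_contra hj'S
        have : j' ∈ F \ S := Finset.mem_sdiff.mpr ⟨hj'F, hj'S⟩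
        have := Finset.min'_le _ _ this
        omega
    have : r j0 ≤ S.card + 1 := by
      calc r j0 ≤ (insert j0 S).card := Finset.card_le_card hsub
        _ ≤ S.card + 1 := Finset.card_insert_le _ _
    exact hj0S (Finset.mem_filter.mpr ⟨hj0F, by omega⟩)
  · omega


section RankLemmas

variable {μ : YoungDiagram} {T : SemistandardYoungTableau μ} {a i j : ℕ}


/-- `rank` as a filter of the row free set. -/
lemma rank_eq (hj : free T a i j) :
    rank T a i j = (((range (μ.rowLen i)).filter (fun j' => free T a i j')).filter
      (· ≤ j)).card := by
  refine congrArg Finset.card ?_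
  ext j'
  simp only [Finset.mem_filter, Finset.mem_range]
  constructor
  · rintro ⟨h1, h2⟩
    exact ⟨⟨YoungDiagram.mem_iff_lt_rowLen.mp h2.mem, h2⟩, by omega⟩
  · rintro ⟨⟨h1, h2⟩, h3⟩
    exact ⟨by omega, h2⟩

lemma card_filter_free (s : Finset ℕ) :
    (s.filter (fun j' => free T a i j')).card
      = (s.filter (fun j' => freeA T a i j')).card
        + (s.filter (fun j' => freeB T a i j')).card := by
  rw [← Finset.card_union_of_disjoint]
  · refine congrArg Finset.card ?_
    ext x
    simp only [Finset.mem_filter, Finset.mem_union]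
    simp only [free]
    tauto
  · rw [Finset.disjoint_filter]
    intro x hx h1 h2
    exact h1.not_freeB h2

lemma XY_card :
    ((range (μ.rowLen i)).filter (fun j' => free T a i j')).card = X T a i + Y T a i :=
  card_filter_free _

lemma rank_le (hj : free T a i j) : rank T a i j ≤ X T a i + Y T a i := by
  rw [rank_eq hj, ← XY_card]
  exact Finset.card_le_card (Finset.filter_subset _ _)

lemma one_le_rank (hj : free T a i j) : 1 ≤ rank T a i j := by
  apply Finset.card_pos.mpr
  exact ⟨j, Finset.mem_filter.mpr ⟨Finset.mem_range.mpr (by omega), hj⟩⟩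

/-- Characterization: a free cell has entry `a` iff its rank is at most `X`. -/
lemma entry_eq_a_iff_rank (hj : free T a i j) :
    T i j = a ↔ rank T a i j ≤ X T a i := by
  have hsplit : rank T a i j
      = ((range (j + 1)).filter (fun j' => freeA T a i j')).card
        + ((range (j + 1)).filter (fun j' => freeB T a i j')).card :=
    card_filter_free _
  constructor
  · intro he
    have hB0 : ((range (j + 1)).filter (fun j' => freeB T a i j')).card = 0 := by
      rw [Finset.card_eq_zero, Finset.filter_eq_empty_iff]
      intro j' hj' hfb
      have hj'le : j' ≤ j := by have := Finset.mem_range.mp hj'; omega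
      have h21 := hfb.2.1
      rcases eq_or_lt_of_le hj'le with h | h
      · subst h; omega
      · have := T.row_weak h hj.mem
        omega
    have hsub : (range (j + 1)).filter (fun j' => freeA T a i j')
        ⊆ (range (μ.rowLen i)).filter (fun j' => freeA T a i j') := by
      intro x hx
      obtain ⟨h1, h2⟩ := Finset.mem_filter.mp hx
      exact Finset.mem_filter.mpr ⟨Finset.mem_range.mpr
        (YoungDiagram.mem_iff_lt_rowLen.mp h2.1), h2⟩
    have := Finset.card_le_card hsub
    rw [X]
    omega
  · intro hrk
    by_contra he
    have hfb : freeB T a i j := by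
      rcases hj with h | h
      · exact absurd h.2.1 he
      · exact h
    -- all freeA cells are strictly to the left of j
    have hsub : (range (μ.rowLen i)).filter (fun j' => freeA T a i j')
        ⊆ (range (j + 1)).filter (fun j' => freeA T a i j') := by
      intro x hx
      obtain ⟨h1, h2⟩ := Finset.mem_filter.mp hx
      refine Finset.mem_filter.mpr ⟨Finset.mem_range.mpr ?_, h2⟩
      by_contra hxj
      have hxj' : j < x := by omega
      have := T.row_weak hxj' h2.1
      have := h2.2.1
      have := hfb.2.1
      omega
    have hXle := Finset.card_le_card hsub
    have hBpos : 1 ≤ ((range (j + 1)).filter (fun j' => freeB T a i j')).card := by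
      apply Finset.card_pos.mpr
      exact ⟨j, Finset.mem_filter.mpr ⟨Finset.mem_range.mpr (by omega), hfb⟩⟩
    rw [X] at hrk
    omega

lemma rank_lt_rank (hj : free T a i j) {j2 : ℕ} (hj2 : free T a i j2) (hlt : j < j2) :
    rank T a i j < rank T a i j2 := by
  rw [rank, rank]
  apply Finset.card_lt_card
  constructor
  · intro x hx
    obtain ⟨h1, h2⟩ := Finset.mem_filter.mp hx
    exact Finset.mem_filter.mpr ⟨Finset.mem_range.mpr (by have := Finset.mem_range.mp h1; omega), h2⟩
  · intro hsub
    have : j2 ∈ (range (j2 + 1)).filter (fun j' => free T a i j') :=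
      Finset.mem_filter.mpr ⟨Finset.mem_range.mpr (by omega), hj2⟩
    have := Finset.mem_filter.mp (hsub this)
    have := Finset.mem_range.mp this.1
    omega

end RankLemmas
section BKT

variable {μ : YoungDiagram} {T : SemistandardYoungTableau μ} {a i j : ℕ}


lemma bkE_of_not_free (h : ¬ free T a i j) : bkE T a i j = T i j := if_neg h

lemma bkE_of_free (h : free T a i j) :
    bkE T a i j = a ∨ bkE T a i j = a + 1 := by
  rw [bkE, if_pos h]
  split <;> simp

lemma bkE_ge (h : free T a i j) : a ≤ bkE T a i j := by
  rcases bkE_of_free h with h' | h' <;> omega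

lemma bkE_le (h : free T a i j) : bkE T a i j ≤ a + 1 := by
  rcases bkE_of_free h with h' | h' <;> omega

lemma bkE_col_adj (hm : (i + 1, j) ∈ μ) : bkE T a i j < bkE T a (i + 1) j := by
  by_cases h1 : free T a i j
  · obtain ⟨hb1, hb2, hb3⟩ := below_free h1
    rw [bkE_of_not_free hb3]
    have := hb2 hm
    have := bkE_le h1
    omega
  · by_cases h2 : free T a (i + 1) j
    · obtain ⟨ha1, _⟩ := above_free h2 (by omega)
      simp only [Nat.add_sub_cancel] at ha1
      rw [bkE_of_not_free h1]
      have := bkE_ge h2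
      omega
    · rw [bkE_of_not_free h1, bkE_of_not_free h2]
      exact T.col_strict (by omega) hm

lemma bkE_row_adj (hm : (i, j + 1) ∈ μ) : bkE T a i j ≤ bkE T a i (j + 1) := by
  have hmj : (i, j) ∈ μ := μ.up_left_mem le_rfl (by omega) hm
  by_cases h1 : free T a i j <;> by_cases h2 : free T a i (j + 1)
  · -- both free
    rw [bkE, if_pos h1, bkE, if_pos h2]
    have hrk := rank_lt_rank h1 h2 (by omega)
    split <;> split <;> omega
  · -- j free, j+1 not free
    rw [bkE_of_not_free h2]
    have hge : a + 1 ≤ T i (j + 1) := by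
      rcases h1.entry with he | he
      · -- entry a
        have hge0 : a ≤ T i (j + 1) := he ▸ T.row_weak (by omega) hm
        rcases eq_or_lt_of_le hge0 with heq | h
        · -- T i (j+1) = a, not free, so has a+1 below: contradiction with freeness of j
          exfalso
          have hfa : T (i + 1) (j + 1) = a + 1 := by
            by_contra hne
            exact h2 (Or.inl ⟨hm, heq.symm, hne⟩)
          have hmb : (i + 1, j + 1) ∈ μ := by
            by_contra hnm
            rw [T.zeros hnm] at hfa; omega
          have hmb' : (i + 1, j) ∈ μ := μ.up_left_mem le_rfl (by omega) hmb
          have hr : T (i + 1) j ≤ T (i + 1) (j + 1) := T.row_weak (by omega) hmb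
          have hc : T i j < T (i + 1) j := T.col_strict (by omega) hmb'
          have hfaj : freeA T a i j := by
            rcases h1 with h | h
            · exact h
            · exfalso; have := h.2.1; omega
          exact hfaj.2.2 (by omega)
        · omega
      · have := T.row_weak (show j < j + 1 by omega) hm; omega
    have := bkE_le h1
    omega
  · -- j not free, j+1 free
    rw [bkE_of_not_free h1]
    have hle : T i j ≤ a := by
      have hle1 : T i j ≤ T i (j + 1) := T.row_weak (by omega) hm
      rcases h2.entry with he | he
      · omega
      · -- T i (j+1) = a+1; if T i j = a+1 then j locked b, contradiction with j+1 free
        rcases eq_or_lt_of_le hle1 with heq | h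
        · exfalso
          rw [he] at heq
          have hfb : T (i - 1) j = a := by
            by_contra hne
            exact h1 (Or.inr ⟨hmj, heq, hne⟩)
          have hi0 : i ≠ 0 := by
            intro h0
            subst h0
            simp only [Nat.zero_sub] at hfb
            omega
          have hm' : (i - 1, j + 1) ∈ μ := μ.up_left_mem (by omega) le_rfl hm
          have hr : T (i - 1) j ≤ T (i - 1) (j + 1) := T.row_weak (by omega) hm'
          have hc : T (i - 1) (j + 1) < T i (j + 1) := T.col_strict (by omega) hm
          have : freeB T a i (j + 1) := by
            rcases h2 with h | h
            · exfalso; have := h.2.1; omega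
            · exact h
          exact this.2.2 (by omega)
        · omega
    have := bkE_ge h2
    omega
  · rw [bkE_of_not_free h1, bkE_of_not_free h2]
    exact T.row_weak (by omega) hm

/-- The Bender–Knuth involution applied to a tableau. -/
noncomputable def bkT (T : SemistandardYoungTableau μ) (a : ℕ) :
    SemistandardYoungTableau μ where
  entry := bkE T a
  row_weak' := by
    intro i j1 j2 hj hm
    induction j2 with
    | zero => omega
    | succ j2 ih =>
      rcases Nat.lt_or_ge j1 j2 with h | h
      · exact (ih h (μ.up_left_mem le_rfl (by omega) hm)).trans (bkE_row_adj hm)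
      · have : j1 = j2 := by omega
        subst this
        exact bkE_row_adj hm
  col_strict' := by
    intro i1 i2 j hi hm
    induction i2 with
    | zero => omega
    | succ i2 ih =>
      rcases Nat.lt_or_ge i1 i2 with h | h
      · exact (ih h (μ.up_left_mem (by omega) le_rfl hm)).trans (bkE_col_adj hm)
      · have : i1 = i2 := by omega
        subst this
        exact bkE_col_adj hm
  zeros' := by
    intro i j hm
    have : ¬ free T a i j := fun h => hm h.mem
    rw [bkE_of_not_free this]
    exact T.zeros hm

@[simp] lemma bkT_apply : bkT T a i j = bkE T a i j := rfl

end BKT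

section Involution

variable {μ : YoungDiagram} {T : SemistandardYoungTableau μ} {a i j : ℕ}


lemma freeA_of_free (h : free T a i j) (he : T i j = a) : freeA T a i j := by
  rcases h with h | h
  · exact h
  · exfalso; have := h.2.1; omega

lemma freeB_of_free (h : free T a i j) (he : T i j = a + 1) : freeB T a i j := by
  rcases h with h | h
  · exfalso; have := h.2.1; omega
  · exact h

lemma free_bkT : free (bkT T a) a i j ↔ free T a i j := by
  constructor
  · intro h'
    by_contra h
    have heq : bkT T a i j = T i j := bkE_of_not_free h
    rcases h'.entry with he0 | he0
    · have he : T i j = a := by rw [← heq]; exact he0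
      -- T i j = a, not free ⇒ a+1 directly below, which is itself locked
      have hb : T (i + 1) j = a + 1 := by
        by_contra hne
        exact h (Or.inl ⟨h'.mem, he, hne⟩)
      have hmb : (i + 1, j) ∈ μ := by
        by_contra hnm; rw [T.zeros hnm] at hb; omega
      have hnf : ¬ free T a (i + 1) j := by
        rintro (hf | hf)
        · have := hf.2.1; omega
        · have h21 := hf.2.2
          simp only [Nat.add_sub_cancel] at h21
          exact h21 he
      have hA := freeA_of_free h' he0
      exact hA.2.2 (by rw [bkT_apply, bkE_of_not_free hnf]; exact hb)
    · have he : T i j = a + 1 := by rw [← heq]; exact he0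
      have hab : T (i - 1) j = a := by
        by_contra hne
        exact h (Or.inr ⟨h'.mem, he, hne⟩)
      have hi0 : i ≠ 0 := by
        intro h0; subst h0; simp only [Nat.zero_sub] at hab; omega
      have hma : (i - 1, j) ∈ μ := μ.up_left_mem (by omega) le_rfl h'.mem
      have hnf : ¬ free T a (i - 1) j := by
        rintro (hf | hf)
        · have h21 := hf.2.2
          have : i - 1 + 1 = i := by omega
          rw [this] at h21
          exact h21 he
        · have := hf.2.1; omega
      have hB := freeB_of_free h' he0
      exact hB.2.2 (by rw [bkT_apply, bkE_of_not_free hnf]; exact hab)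
  · intro h
    rcases bkE_of_free (T := T) (a := a) (i := i) (j := j) h with he | he
    · refine Or.inl ⟨h.mem, he, ?_⟩
      obtain ⟨hb1, _, hb3⟩ := below_free h
      rw [bkT_apply, bkE_of_not_free hb3]
      exact hb1
    · refine Or.inr ⟨h.mem, he, ?_⟩
      by_cases hi0 : i = 0
      · subst hi0
        simp only [Nat.zero_sub]
        rw [bkT_apply]
        omega
      · obtain ⟨ha1, ha2⟩ := above_free h hi0
        rw [bkT_apply, bkE_of_not_free ha2]
        omega

lemma rank_bkT : rank (bkT T a) a i j = rank T a i j := by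
  refine congrArg Finset.card ?_
  ext j'
  simp only [Finset.mem_filter, free_bkT]

lemma filter_rank_le {m : ℕ} (hm : m ≤ X T a i + Y T a i) :
    ((range (μ.rowLen i)).filter
      (fun j => free T a i j ∧ rank T a i j ≤ m)).card = m := by
  set F := (range (μ.rowLen i)).filter (fun j' => free T a i j') with hF
  have hFc : F.card = X T a i + Y T a i := XY_card
  have hset : (range (μ.rowLen i)).filter (fun j => free T a i j ∧ rank T a i j ≤ m)
      = F.filter (fun j => (F.filter (· ≤ j)).card ≤ m) := by
    ext j'
    simp only [hF, Finset.mem_filter, Finset.mem_range]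
    constructor
    · rintro ⟨h1, h2, h3⟩
      rw [rank_eq h2] at h3
      exact ⟨⟨h1, h2⟩, h3⟩
    · rintro ⟨⟨h1, h2⟩, h3⟩
      rw [← rank_eq h2] at h3
      exact ⟨h1, h2, h3⟩
  rw [hset]
  exact count_rank_le F m (by omega)

lemma Y_bkT : Y (bkT T a) a i = X T a i := by
  have h1 : ((range (μ.rowLen i)).filter (fun j' => freeB (bkT T a) a i j'))
      = (range (μ.rowLen i)).filter
          (fun j' => free T a i j' ∧ ¬ (rank T a i j' ≤ Y T a i)) := by
    ext j'
    simp only [Finset.mem_filter]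
    constructor
    · rintro ⟨h1, h2⟩
      have hf' : free (bkT T a) a i j' := Or.inr h2
      have hf : free T a i j' := free_bkT.mp hf'
      refine ⟨h1, hf, ?_⟩
      have := h2.2.1
      rw [bkT_apply, bkE, if_pos hf] at this
      intro hle
      rw [if_pos hle] at this
      omega
    · rintro ⟨h1, hf, hgt⟩
      refine ⟨h1, ?_⟩
      have he : bkT T a i j' = a + 1 := by
        rw [bkT_apply, bkE, if_pos hf, if_neg hgt]
      exact freeB_of_free (free_bkT.mpr hf) he
  have h2 : ((range (μ.rowLen i)).filter (fun j' => free T a i j' ∧ rank T a i j' ≤ Y T a i)).card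
      + ((range (μ.rowLen i)).filter
          (fun j' => free T a i j' ∧ ¬ (rank T a i j' ≤ Y T a i))).card
      = X T a i + Y T a i := by
    rw [← XY_card (T := T) (a := a) (i := i)]
    rw [← Finset.card_filter_add_card_filter_not
      (s := (range (μ.rowLen i)).filter (fun j' => free T a i j'))
      (p := fun j' => rank T a i j' ≤ Y T a i)]
    congr 1 <;> rw [Finset.filter_filter]
  have h3 := filter_rank_le (T := T) (a := a) (i := i) (m := Y T a i) (by omega)
  rw [Y, h1]
  omega

lemma bkT_bkT : bkT (bkT T a) a = T := by
  apply SemistandardYoungTableau.ext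
  intro i j
  by_cases h : free T a i j
  · have h' : free (bkT T a) a i j := free_bkT.mpr h
    rw [show (bkT (bkT T a) a) i j = bkE (bkT T a) a i j from rfl,
      bkE, if_pos h', rank_bkT, Y_bkT]
    rcases h.entry with he | he
    · rw [if_pos ((entry_eq_a_iff_rank h).mp he), he]
    · rw [if_neg, he]
      intro hle
      have := (entry_eq_a_iff_rank h).mpr hle
      omega
  · have h' : ¬ free (bkT T a) a i j := fun hf => h (free_bkT.mp hf)
    rw [show (bkT (bkT T a) a) i j = bkE (bkT T a) a i j from rfl,
      bkE_of_not_free h', bkT_apply, bkE_of_not_free h]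

end Involution

section Content

variable {μ : YoungDiagram} {T : SemistandardYoungTableau μ} {a i j : ℕ}

/-- Number of entries of `T` equal to `k`. -/
def cnt (T : SemistandardYoungTableau μ) (k : ℕ) : ℕ :=
  (μ.cells.filter (fun c => T c.1 c.2 = k)).card

lemma card_filter_iff {α : Type*} {s : Finset α} {p q : α → Prop}
    [DecidablePred p] [DecidablePred q] (h : ∀ x ∈ s, p x ↔ q x) :
    (s.filter p).card = (s.filter q).card := by
  refine congrArg Finset.card ?_
  ext x
  simp only [Finset.mem_filter]
  exact ⟨fun ⟨h1, h2⟩ => ⟨h1, (h x h1).mp h2⟩, fun ⟨h1, h2⟩ => ⟨h1, (h x h1).mpr h2⟩⟩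

lemma card_cells_filter (P : ℕ → ℕ → Prop) [∀ i, DecidablePred (P i)]
    [DecidablePred (fun c : ℕ × ℕ => P c.1 c.2)] :
    (μ.cells.filter (fun c => P c.1 c.2)).card
      = ∑ i ∈ range (μ.colLen 0), ((range (μ.rowLen i)).filter (P i)).card := by
  rw [← Finset.card_sigma]
  apply Finset.card_bij' (i := fun (c : ℕ × ℕ) (_ : c ∈ μ.cells.filter (fun c => P c.1 c.2)) =>
      (⟨c.1, c.2⟩ : (_ : ℕ) × ℕ))
    (j := fun x _ => (x.1, x.2))
  · intro c hc
    obtain ⟨hc1, hc2⟩ := Finset.mem_filter.mp hc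
    have hcm := (YoungDiagram.mem_cells _).mp hc1
    rw [Finset.mem_sigma]
    constructor
    · rw [Finset.mem_range, ← YoungDiagram.mem_iff_lt_colLen]
      exact μ.up_left_mem le_rfl (Nat.zero_le _) hcm
    · exact Finset.mem_filter.mpr ⟨Finset.mem_range.mpr
        (YoungDiagram.mem_iff_lt_rowLen.mp hcm), hc2⟩
  · intro x hx
    obtain ⟨hx1, hx2⟩ := Finset.mem_sigma.mp hx
    obtain ⟨hx3, hx4⟩ := Finset.mem_filter.mp hx2
    refine Finset.mem_filter.mpr ⟨?_, hx4⟩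
    rw [YoungDiagram.mem_cells, YoungDiagram.mem_iff_lt_rowLen]
    exact Finset.mem_range.mp hx3
  · intro c hc; rfl
  · intro x hx; rfl

lemma card_filter_split {α : Type*} (s : Finset α) (p q : α → Prop)
    [DecidablePred p] [DecidablePred q] :
    (s.filter p).card
      = (s.filter (fun c => p c ∧ q c)).card + (s.filter (fun c => p c ∧ ¬ q c)).card := by
  have h0 := Finset.card_filter_add_card_filter_not (s := s.filter p) (p := q)
  have h1 : ((s.filter p).filter q).card = (s.filter (fun c => p c ∧ q c)).card := by
    refine congrArg Finset.card ?_
    ext x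
    simp only [Finset.mem_filter]
    tauto
  have h2 : ((s.filter p).filter (fun c => ¬ q c)).card
      = (s.filter (fun c => p c ∧ ¬ q c)).card := by
    refine congrArg Finset.card ?_
    ext x
    simp only [Finset.mem_filter]
    tauto
  omega

/-- The locked `a`-cells biject with the locked `a+1`-cells (shift down by one row). -/
lemma locked_card_eq :
    (μ.cells.filter (fun c => T c.1 c.2 = a ∧ ¬ free T a c.1 c.2)).card
      = (μ.cells.filter (fun c => T c.1 c.2 = a + 1 ∧ ¬ free T a c.1 c.2)).card := by
  apply Finset.card_bij'
    (i := fun (c : ℕ × ℕ) _ => (c.1 + 1, c.2)) (j := fun (c : ℕ × ℕ) _ => (c.1 - 1, c.2))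
  · intro c hc
    obtain ⟨hc1, he, hnf⟩ := Finset.mem_filter.mp hc
    have hcm := (YoungDiagram.mem_cells _).mp hc1
    have hb : T (c.1 + 1) c.2 = a + 1 := by
      by_contra hne
      exact hnf (Or.inl ⟨hcm, he, hne⟩)
    have hmb : (c.1 + 1, c.2) ∈ μ := by
      by_contra hnm; rw [T.zeros hnm] at hb; omega
    refine Finset.mem_filter.mpr ⟨(YoungDiagram.mem_cells _).mpr hmb, hb, ?_⟩
    rintro (hf | hf)
    · have h21 : T (c.1 + 1) c.2 = a := hf.2.1
      omega
    · have h22 : T (c.1 + 1 - 1) c.2 ≠ a := hf.2.2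
      simp only [Nat.add_sub_cancel] at h22
      exact h22 he
  · intro c hc
    obtain ⟨hc1, he, hnf⟩ := Finset.mem_filter.mp hc
    have hcm := (YoungDiagram.mem_cells _).mp hc1
    have hab : T (c.1 - 1) c.2 = a := by
      by_contra hne
      exact hnf (Or.inr ⟨hcm, he, hne⟩)
    have hi0 : c.1 ≠ 0 := by
      intro h0; rw [h0] at hab; simp only [Nat.zero_sub] at hab; rw [h0] at he; omega
    have hma : (c.1 - 1, c.2) ∈ μ := μ.up_left_mem (by omega) le_rfl hcm
    refine Finset.mem_filter.mpr ⟨(YoungDiagram.mem_cells _).mpr hma, hab, ?_⟩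
    rintro (hf | hf)
    · have h22 : T (c.1 - 1 + 1) c.2 ≠ a + 1 := hf.2.2
      have hrw : c.1 - 1 + 1 = c.1 := by omega
      rw [hrw] at h22
      exact h22 he
    · have h21 : T (c.1 - 1) c.2 = a + 1 := hf.2.1
      omega
  · intro c hc
    simp
  · intro c hc
    obtain ⟨hc1, he, hnf⟩ := Finset.mem_filter.mp hc
    have hcm := (YoungDiagram.mem_cells _).mp hc1
    have hab : T (c.1 - 1) c.2 = a := by
      by_contra hne
      exact hnf (Or.inr ⟨hcm, he, hne⟩)
    have hi0 : c.1 ≠ 0 := by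
      intro h0; rw [h0] at hab; simp only [Nat.zero_sub] at hab; rw [h0] at he; omega
    have hrw : c.1 - 1 + 1 = c.1 := by omega
    rw [hrw]

lemma free_count_a1 :
    ((range (μ.rowLen i)).filter (fun j => T i j = a + 1 ∧ free T a i j)).card
      = Y T a i := by
  refine card_filter_iff ?_
  intro j' _
  constructor
  · rintro ⟨h2, h3⟩
    exact freeB_of_free h3 h2
  · rintro h2
    exact ⟨h2.2.1, Or.inr h2⟩

lemma free_count_a :
    ((range (μ.rowLen i)).filter (fun j => T i j = a ∧ free T a i j)).card
      = X T a i := by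
  refine card_filter_iff ?_
  intro j' _
  constructor
  · rintro ⟨h2, h3⟩
    exact freeA_of_free h3 h2
  · rintro h2
    exact ⟨h2.2.1, Or.inl h2⟩

lemma free_count_bk_a :
    ((range (μ.rowLen i)).filter (fun j => bkT T a i j = a ∧ free T a i j)).card
      = Y T a i := by
  have h1 : ((range (μ.rowLen i)).filter (fun j => bkT T a i j = a ∧ free T a i j)).card
      = ((range (μ.rowLen i)).filter
          (fun j => free T a i j ∧ rank T a i j ≤ Y T a i)).card := by
    refine card_filter_iff ?_
    intro j' _
    constructor
    · rintro ⟨h2, h3⟩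
      refine ⟨h3, ?_⟩
      rw [bkT_apply, bkE, if_pos h3] at h2
      by_contra hgt
      rw [if_neg hgt] at h2
      omega
    · rintro ⟨h2, h3⟩
      refine ⟨?_, h2⟩
      rw [bkT_apply, bkE, if_pos h2, if_pos h3]
  rw [h1]
  exact filter_rank_le (by omega)

lemma free_count_bk_a1 :
    ((range (μ.rowLen i)).filter (fun j => bkT T a i j = a + 1 ∧ free T a i j)).card
      = X T a i := by
  have key := Y_bkT (T := T) (a := a) (i := i)
  rw [Y] at key
  rw [← key]
  refine card_filter_iff ?_
  intro j' _
  constructor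
  · rintro ⟨h2, h3⟩
    exact freeB_of_free (free_bkT.mpr h3) h2
  · rintro h2
    exact ⟨h2.2.1, free_bkT.mp (Or.inr h2)⟩

lemma cnt_bkT_of_ne {k : ℕ} (h1 : k ≠ a) (h2 : k ≠ a + 1) :
    cnt (bkT T a) k = cnt T k := by
  refine card_filter_iff ?_
  intro c hc
  by_cases hf : free T a c.1 c.2
  · constructor
    · intro he
      exfalso
      rcases bkE_of_free hf with h | h <;> rw [bkT_apply, h] at he <;> omega
    · intro he
      exfalso
      rcases hf.entry with h | h <;> omega
  · rw [bkT_apply, bkE_of_not_free hf]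

lemma cnt_bkT_a : cnt (bkT T a) a = cnt T (a + 1) := by
  have e1 : cnt (bkT T a) a
      = (μ.cells.filter (fun c => bkT T a c.1 c.2 = a ∧ free T a c.1 c.2)).card
        + (μ.cells.filter (fun c => bkT T a c.1 c.2 = a ∧ ¬ free T a c.1 c.2)).card :=
    card_filter_split _ _ _
  have e2 : cnt T (a + 1)
      = (μ.cells.filter (fun c => T c.1 c.2 = a + 1 ∧ free T a c.1 c.2)).card
        + (μ.cells.filter (fun c => T c.1 c.2 = a + 1 ∧ ¬ free T a c.1 c.2)).card :=
    card_filter_split _ _ _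
  have e3 : (μ.cells.filter (fun c => bkT T a c.1 c.2 = a ∧ free T a c.1 c.2)).card
      = (μ.cells.filter (fun c => T c.1 c.2 = a + 1 ∧ free T a c.1 c.2)).card := by
    have l1 := card_cells_filter (μ := μ) (fun i j => bkT T a i j = a ∧ free T a i j)
    have l2 := card_cells_filter (μ := μ) (fun i j => T i j = a + 1 ∧ free T a i j)
    rw [l1, l2]
    refine Finset.sum_congr rfl ?_
    intro i _
    rw [free_count_bk_a, free_count_a1]
  have e4 : (μ.cells.filter (fun c => bkT T a c.1 c.2 = a ∧ ¬ free T a c.1 c.2)).card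
      = (μ.cells.filter (fun c => T c.1 c.2 = a + 1 ∧ ¬ free T a c.1 c.2)).card := by
    have he : (μ.cells.filter (fun c => bkT T a c.1 c.2 = a ∧ ¬ free T a c.1 c.2)).card
        = (μ.cells.filter (fun c => T c.1 c.2 = a ∧ ¬ free T a c.1 c.2)).card := by
      refine card_filter_iff ?_
      intro c hc
      constructor
      · rintro ⟨h1, h2⟩
        rw [bkT_apply, bkE_of_not_free h2] at h1
        exact ⟨h1, h2⟩
      · rintro ⟨h1, h2⟩
        rw [bkT_apply, bkE_of_not_free h2]
        exact ⟨h1, h2⟩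
    rw [he]
    exact locked_card_eq
  omega

lemma cnt_bkT_a1 : cnt (bkT T a) (a + 1) = cnt T a := by
  have e1 : cnt (bkT T a) (a + 1)
      = (μ.cells.filter (fun c => bkT T a c.1 c.2 = a + 1 ∧ free T a c.1 c.2)).card
        + (μ.cells.filter (fun c => bkT T a c.1 c.2 = a + 1 ∧ ¬ free T a c.1 c.2)).card :=
    card_filter_split _ _ _
  have e2 : cnt T a
      = (μ.cells.filter (fun c => T c.1 c.2 = a ∧ free T a c.1 c.2)).card
        + (μ.cells.filter (fun c => T c.1 c.2 = a ∧ ¬ free T a c.1 c.2)).card :=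
    card_filter_split _ _ _
  have e3 : (μ.cells.filter (fun c => bkT T a c.1 c.2 = a + 1 ∧ free T a c.1 c.2)).card
      = (μ.cells.filter (fun c => T c.1 c.2 = a ∧ free T a c.1 c.2)).card := by
    have l1 := card_cells_filter (μ := μ) (fun i j => bkT T a i j = a + 1 ∧ free T a i j)
    have l2 := card_cells_filter (μ := μ) (fun i j => T i j = a ∧ free T a i j)
    rw [l1, l2]
    refine Finset.sum_congr rfl ?_
    intro i _
    rw [free_count_bk_a1, free_count_a]
  have e4 : (μ.cells.filter (fun c => bkT T a c.1 c.2 = a + 1 ∧ ¬ free T a c.1 c.2)).card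
      = (μ.cells.filter (fun c => T c.1 c.2 = a ∧ ¬ free T a c.1 c.2)).card := by
    have he : (μ.cells.filter (fun c => bkT T a c.1 c.2 = a + 1 ∧ ¬ free T a c.1 c.2)).card
        = (μ.cells.filter (fun c => T c.1 c.2 = a + 1 ∧ ¬ free T a c.1 c.2)).card := by
      refine card_filter_iff ?_
      intro c hc
      constructor
      · rintro ⟨h1, h2⟩
        rw [bkT_apply, bkE_of_not_free h2] at h1
        exact ⟨h1, h2⟩
      · rintro ⟨h1, h2⟩
        rw [bkT_apply, bkE_of_not_free h2]
        exact ⟨h1, h2⟩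
    rw [he]
    exact locked_card_eq.symm
  omega

end Content

end BK

section Final

open BK

variable {μ : YoungDiagram} {n : ℕ}

/-- The Bender-Knuth involution on bounded tableaux. -/
noncomputable def bkFun (a : ℕ) (ha : a + 1 < n) (T : SSYTn μ n) : SSYTn μ n :=
  ⟨bkT T.1 a, by
    intro i j hm
    by_cases hf : free T.1 a i j
    · have := bkE_le hf
      rw [bkT_apply]
      omega
    · rw [bkT_apply, bkE_of_not_free hf]
      exact T.2 i j hm⟩

lemma bkFun_involutive (a : ℕ) (ha : a + 1 < n) : Function.Involutive (bkFun (μ := μ) a ha) := by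
  intro T
  apply Subtype.ext
  exact bkT_bkT

/-- The Bender-Knuth involution as a permutation of bounded tableaux. -/
noncomputable def bkPerm (a : ℕ) (ha : a + 1 < n) : SSYTn μ n ≃ SSYTn μ n :=
  (bkFun_involutive (μ := μ) a ha).toPerm

lemma bkPerm_apply (a : ℕ) (ha : a + 1 < n) (T : SSYTn μ n) :
    (bkPerm (μ := μ) a ha T).1 = bkT T.1 a := rfl

/-- There is a permutation of bounded tableaux that cyclically shifts contents. -/
lemma exists_shift (hn : 1 ≤ n) (m : ℕ) (hm : m ≤ n - 1) :
    ∃ Φ : SSYTn μ n ≃ SSYTn μ n,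
      (∀ T : SSYTn μ n, ∀ k, k < m → cnt (Φ T).1 k = cnt T.1 (k + 1))
      ∧ (∀ T : SSYTn μ n, cnt (Φ T).1 m = cnt T.1 0)
      ∧ (∀ T : SSYTn μ n, ∀ k, m < k → cnt (Φ T).1 k = cnt T.1 k) := by
  induction m with
  | zero =>
    exact ⟨Equiv.refl _, fun T k hk => by omega, fun T => rfl, fun T k hk => rfl⟩
  | succ m ih =>
    obtain ⟨Φ, h1, h2, h3⟩ := ih (by omega)
    have ha : m + 1 < n := by omega
    refine ⟨Φ.trans (bkPerm m ha), ?_, ?_, ?_⟩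
    · intro T k hk
      have happ : ((Φ.trans (bkPerm m ha)) T).1 = bkT (Φ T).1 m := rfl
      rw [happ]
      rcases Nat.lt_or_ge k m with h | h
      · rw [cnt_bkT_of_ne (by omega) (by omega), h1 T k h]
      · have hk' : k = m := by omega
        subst hk'
        rw [cnt_bkT_a, h3 T (k + 1) (by omega)]
    · intro T
      have happ : ((Φ.trans (bkPerm m ha)) T).1 = bkT (Φ T).1 m := rfl
      rw [happ, cnt_bkT_a1, h2 T]
    · intro T k hk
      have happ : ((Φ.trans (bkPerm m ha)) T).1 = bkT (Φ T).1 m := rfl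
      rw [happ, cnt_bkT_of_ne (by omega) (by omega), h3 T k (by omega)]

lemma sum_cnt (T : SSYTn μ n) : ∑ k ∈ range n, cnt T.1 k = μ.card := by
  rw [YoungDiagram.card]
  rw [Finset.card_eq_sum_card_fiberwise (f := fun c : ℕ × ℕ => T.1 c.1 c.2)
    (t := range n) (fun c hc => Finset.mem_range.mpr (T.2 c.1 c.2 ((YoungDiagram.mem_cells _).mp hc)))]
  rfl

/-- The statistic. -/
def statn (T : SSYTn μ n) : ℕ := ∑ i : Fin n, (i : ℕ) * ssytContent μ n T i

lemma statn_eq (T : SSYTn μ n) : statn T = ∑ k ∈ range n, k * cnt T.1 k :=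
  Fin.sum_univ_eq_sum_range (fun k => k * cnt T.1 k) n

end Final


section Final2

open BK

variable {μ : YoungDiagram} {n : ℕ}

/-- The statistic with values in `ZMod n`. -/
noncomputable def statZ (T : SSYTn μ n) : ZMod n := (statn T : ZMod n)

lemma sum_shift_identity (m : ℕ) (c : ℕ → ZMod (m + 1)) :
    ∑ k ∈ range m, (k : ZMod (m + 1)) * c (k + 1) + (m : ZMod (m + 1)) * c 0
      = ∑ k ∈ range (m + 1), (k : ZMod (m + 1)) * c k - ∑ k ∈ range (m + 1), c k := by
  have e1 : ∑ k ∈ range (m + 1), (k : ZMod (m + 1)) * c k - ∑ k ∈ range (m + 1), c k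
      = ∑ k ∈ range (m + 1), ((k : ZMod (m + 1)) - 1) * c k := by
    rw [← Finset.sum_sub_distrib]
    refine Finset.sum_congr rfl ?_
    intro k _
    ring
  rw [e1, Finset.sum_range_succ' (fun k => ((k : ZMod (m + 1)) - 1) * c k) m]
  have hm1 : ((m : ZMod (m + 1)) : ZMod (m + 1)) + 1 = 0 := by
    have : ((m + 1 : ℕ) : ZMod (m + 1)) = 0 := ZMod.natCast_self _
    push_cast at this
    exact this
  have e2 : ∀ k, (((k : ℕ) + 1 : ℕ) : ZMod (m + 1)) - 1 = (k : ZMod (m + 1)) := by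
    intro k; push_cast; ring
  have e3 : ∑ k ∈ range m, (((k + 1 : ℕ) : ZMod (m + 1)) - 1) * c (k + 1)
      = ∑ k ∈ range m, (k : ZMod (m + 1)) * c (k + 1) := by
    refine Finset.sum_congr rfl ?_
    intro k _
    rw [e2]
  rw [e3]
  have : (((0 : ℕ) : ZMod (m + 1)) - 1) * c 0 = (m : ZMod (m + 1)) * c 0 := by
    have : ((0 : ℕ) : ZMod (m + 1)) - 1 = (m : ZMod (m + 1)) := by
      push_cast
      linear_combination -hm1
    rw [this]
  rw [this]

lemma statZ_shift (hn : 1 ≤ n) :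
    ∃ Φ : SSYTn μ n ≃ SSYTn μ n, ∀ T, statZ (Φ T) = statZ T - (μ.card : ZMod n) := by
  obtain ⟨Φ, h1, h2, h3⟩ := exists_shift (μ := μ) hn (n - 1) le_rfl
  refine ⟨Φ, fun T => ?_⟩
  have hsum : ∀ S : SSYTn μ n, statZ S = ∑ k ∈ range n, (k : ZMod n) * (cnt S.1 k : ZMod n) := by
    intro S
    rw [statZ, statn_eq]
    push_cast
    rfl
  have hcard : (μ.card : ZMod n) = ∑ k ∈ range n, (cnt T.1 k : ZMod n) := by
    rw [← sum_cnt T]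
    push_cast
    rfl
  rw [hsum, hsum, hcard]
  obtain ⟨m, rfl⟩ : ∃ m, n = m + 1 := ⟨n - 1, by omega⟩
  simp only [Nat.add_sub_cancel] at h1 h2
  have lhs_eq : ∑ k ∈ range (m + 1), (k : ZMod (m + 1)) * (cnt (Φ T).1 k : ZMod (m + 1))
      = ∑ k ∈ range m, (k : ZMod (m + 1)) * (cnt T.1 (k + 1) : ZMod (m + 1))
        + (m : ZMod (m + 1)) * (cnt T.1 0 : ZMod (m + 1)) := by
    rw [Finset.sum_range_succ, h2 T]
    congr 1
    refine Finset.sum_congr rfl ?_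
    intro k hk
    rw [h1 T k (Finset.mem_range.mp hk)]
  rw [lhs_eq]
  exact sum_shift_identity m (fun k => (cnt T.1 k : ZMod (m + 1)))

end Final2

theorem stmt8 (n : ℕ) (μ : YoungDiagram) (hlen : μ.colLen 0 < n)
    (hgcd : Nat.Coprime n μ.card) :
    ∀ r : ℕ, r < n →
      n * Nat.card {T : SSYTn μ n // (∑ i : Fin n, (i : ℕ) * ssytContent μ n T i) % n = r}
        = Fintype.card (SSYTn μ n) := by
  intro r hr
  have hn : 0 < n := by omega
  haveI : NeZero n := ⟨by omega⟩
  obtain ⟨Φ, hΦ⟩ := statZ_shift (μ := μ) (n := n) (by omega)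
  set c : ZMod n := (μ.card : ZMod n) with hc
  set g : ZMod n → ℕ := fun s => Nat.card {T : SSYTn μ n // statZ T = s} with hg
  have hstep : ∀ s, g s = g (s - c) := by
    intro s
    apply Nat.card_congr
    refine Equiv.subtypeEquiv Φ (fun T => ?_)
    rw [hΦ T, sub_left_inj]
  have hiter : ∀ k : ℕ, ∀ s, g (s - (k : ZMod n) * c) = g s := by
    intro k
    induction k with
    | zero => intro s; simp
    | succ k ih =>
      intro s
      have he : s - ((k : ℕ) + 1 : ℕ) * c = (s - (k : ZMod n) * c) - c := by
        push_cast
        ring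
      rw [he, ← hstep (s - (k : ZMod n) * c), ih s]
  have hconst : ∀ s t : ZMod n, g s = g t := by
    intro s t
    have hu : IsUnit c := by
      rw [hc, ZMod.isUnit_iff_coprime]
      exact Nat.Coprime.symm hgcd
    obtain ⟨u, hu⟩ := hu
    set k : ℕ := ((s - t) * ((u⁻¹ : (ZMod n)ˣ) : ZMod n)).val with hk
    have hkc : (k : ZMod n) * c = s - t := by
      rw [hk, ZMod.natCast_val, ZMod.cast_id, ← hu, mul_assoc]
      rw [Units.inv_mul]
      ring
    have h1 := hiter k s
    rw [hkc] at h1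
    simpa using h1.symm
  have htot : ∑ s : ZMod n, g s = Fintype.card (SSYTn μ n) := by
    have he := Fintype.card_congr (Equiv.sigmaFiberEquiv (fun T : SSYTn μ n => statZ T))
    rw [Fintype.card_sigma] at he
    rw [← he]
    refine Finset.sum_congr rfl ?_
    intro s _
    exact Nat.card_eq_fintype_card
  have hsame : n * g ((r : ZMod n)) = Fintype.card (SSYTn μ n) := by
    rw [← htot, Finset.sum_congr rfl (fun t _ => hconst t ((r : ZMod n)))]
    rw [Finset.sum_const, Finset.card_univ, ZMod.card, smul_eq_mul]
  have hcardeq : Nat.card {T : SSYTn μ n //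
      (∑ i : Fin n, (i : ℕ) * ssytContent μ n T i) % n = r} = g ((r : ZMod n)) := by
    apply Nat.card_congr
    refine Equiv.subtypeEquiv (Equiv.refl _) (fun T => ?_)
    simp only [Equiv.refl_apply]
    have hds : (∑ i : Fin n, (i : ℕ) * ssytContent μ n T i) = statn T := rfl
    rw [hds]
    constructor
    · intro h
      rw [statZ]
      rw [ZMod.natCast_eq_natCast_iff']
      rw [Nat.mod_eq_of_lt hr]
      exact h
    · intro h
      rw [statZ, ZMod.natCast_eq_natCast_iff', Nat.mod_eq_of_lt hr] at h
      exact h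
  rw [hcardeq, hsame]
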